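/- Assume additionally that every element of Ω¹ is a finite sum of elements of the form f·d₀g with f, g ∈ A. Then for all f, g ∈ A and β, γ ∈ Ω¹ the metacurvature expression satisfies M(fg, β, γ) = f·M(g, β, γ) + g·M(f, β, γ); that is, M(f, β, γ) depends on f only through d₀f and does so A-linearly. (Together with the linearity in β and γ, this shows the metacurvature is a tensor M^{ijk}_{lm}, symmetric in the contravariant indices and antisymmetric in the covariant indices.) -/
import Mathlib

section Aux

variable {A : Type*} [CommRing A]
    {Ω1 Ω2 : Type*} [AddCommGroup Ω1] [Module A Ω1] [AddCommGroup Ω2] [Module A Ω2]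
    (w : Ω1 →ₗ[A] Ω1 →ₗ[A] Ω2)
    (d0 : A →+ Ω1)
    (d1 : Ω1 →+ Ω2)
    (P0 : A →+ A →+ A) (P1 : A →+ Ω1 →+ Ω1)
    (P11 : Ω1 →+ Ω1 →+ Ω2) (P2 : A →+ Ω2 →+ Ω2)

/-- The metacurvature expression. -/
def Mexpr (h : A) (β γ : Ω1) : Ω2 :=
  P2 h (P11 β γ) - P11 (P1 h β) γ - P11 (P1 h γ) β

lemma Mexpr_swap (hsymm : ∀ β γ : Ω1, P11 β γ = P11 γ β) (h : A) (β γ : Ω1) :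
    Mexpr P1 P11 P2 h β γ = Mexpr P1 P11 P2 h γ β := by
  unfold Mexpr; rw [hsymm β γ]; abel

lemma Mexpr_add_left (h : A) (β β' γ : Ω1) :
    Mexpr P1 P11 P2 h (β + β') γ = Mexpr P1 P11 P2 h β γ + Mexpr P1 P11 P2 h β' γ := by
  unfold Mexpr
  simp only [map_add, AddMonoidHom.add_apply]
  abel

lemma Mexpr_zero_left (h : A) (γ : Ω1) :
    Mexpr P1 P11 P2 h 0 γ = 0 := by
  unfold Mexpr
  simp

lemma Mexpr_smul_left
    (hP1R : ∀ (f g : A) (β : Ω1), P1 f (g • β) = P0 f g • β + g • P1 f β)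
    (hP11P : ∀ (f : A) (β γ : Ω1), P11 (f • β) γ = f • P11 β γ + w β (P1 f γ))
    (hP2L : ∀ (f g : A) (ω : Ω2), P2 f (g • ω) = P0 f g • ω + g • P2 f ω)
    (hP2w : ∀ (f : A) (β γ : Ω1), P2 f (w β γ) = w (P1 f β) γ + w β (P1 f γ))
    (hsymm : ∀ β γ : Ω1, P11 β γ = P11 γ β)
    (hflat : ∀ (f g : A) (β : Ω1), P1 f (P1 g β) - P1 g (P1 f β) = P1 (P0 f g) β)
    (h a : A) (β γ : Ω1) :
    Mexpr P1 P11 P2 h (a • β) γ = a • Mexpr P1 P11 P2 h β γ := by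
  have hP11R : ∀ (c : A) (x y : Ω1), P11 x (c • y) = c • P11 x y + w y (P1 c x) := by
    intro c x y
    rw [hsymm, hP11P, hsymm]
  have hfl : P1 h (P1 a γ) = P1 (P0 h a) γ + P1 a (P1 h γ) :=
    sub_eq_iff_eq_add.mp (hflat h a γ)
  unfold Mexpr
  rw [hP11P, map_add, hP2L, hP2w, hP1R, map_add, AddMonoidHom.add_apply,
    hP11P, hP11P, hP11R, hfl, map_add]
  simp only [smul_sub]
  abel

/-- key symmetry on exact forms: M(f, d0 b, d0 c) = M(b, d0 c, d0 f). -/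
lemma Mexpr_exact_rotate
    (hd1d0 : ∀ f : A, d1 (d0 f) = 0)
    (hsymm : ∀ β γ : Ω1, P11 β γ = P11 γ β)
    (hflat : ∀ (f g : A) (β : Ω1), P1 f (P1 g β) - P1 g (P1 f β) = P1 (P0 f g) β)
    (htf : ∀ f g : A, P1 f (d0 g) - P1 g (d0 f) = d0 (P0 f g))
    (hLeib : ∀ (f : A) (β : Ω1), d1 (P1 f β) = P11 (d0 f) β + P2 f (d1 β))
    (f b c : A) :
    Mexpr P1 P11 P2 f (d0 b) (d0 c) = Mexpr P1 P11 P2 b (d0 c) (d0 f) := by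
  -- for exact arguments, P11 (d0 x) (d0 y) = d1 (P1 x (d0 y))
  have e1 : ∀ x y : A, P11 (d0 x) (d0 y) = d1 (P1 x (d0 y)) := by
    intro x y
    rw [hLeib x (d0 y), hd1d0 y, map_zero, add_zero]
  have etf : ∀ x y : A, P1 x (d0 y) = d0 (P0 x y) + P1 y (d0 x) := fun x y =>
    sub_eq_iff_eq_add.mp (htf x y)
  have efl : P1 f (P1 b (d0 c)) = P1 (P0 f b) (d0 c) + P1 b (P1 f (d0 c)) :=
    sub_eq_iff_eq_add.mp (hflat f b (d0 c))
  have eP2d1 : P2 f (d1 (P1 b (d0 c)))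
      = d1 (P1 f (P1 b (d0 c))) - P11 (d0 f) (P1 b (d0 c)) := by
    rw [hLeib f (P1 b (d0 c))]; abel
  have eP2d1' : P2 b (d1 (P1 c (d0 f)))
      = d1 (P1 b (P1 c (d0 f))) - P11 (d0 b) (P1 c (d0 f)) := by
    rw [hLeib b (P1 c (d0 f))]; abel
  unfold Mexpr
  rw [e1 b c, eP2d1, efl, map_add d1, etf f c, map_add (P1 b), map_add d1,
    hLeib b (P1 c (d0 f)), ← e1 c f, ← e1 (P0 f b) c, ← e1 b (P0 f c),
    etf f b, map_add P11, AddMonoidHom.add_apply, map_add P11, AddMonoidHom.add_apply,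
    hsymm (d0 b) (d0 (P0 f c)), hsymm (d0 b) (P1 c (d0 f)), hsymm (d0 f) (P1 b (d0 c))]
  abel

end Aux


/-- If `Ω¹` is generated over `A` by exact 1-forms, then the metacurvature expression
`M(f,β,γ) := P₂(f,P₁₁(β,γ)) − P₁₁(P₁(f,β),γ) − P₁₁(P₁(f,γ),β)` is a derivation in `f`:
`M(fg, β, γ) = f • M(g,β,γ) + g • M(f,β,γ)`, so `M` depends on `f` only through `d₀f`,
`A`-linearly. -/
theorem metacurvature_derivation_in_function
    {A : Type*} [CommRing A]
    {Ω1 Ω2 : Type*} [AddCommGroup Ω1] [Module A Ω1] [AddCommGroup Ω2] [Module A Ω2]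
    (w : Ω1 →ₗ[A] Ω1 →ₗ[A] Ω2)
    (d0 : A →+ Ω1) (hd0 : ∀ f g : A, d0 (f * g) = f • d0 g + g • d0 f)
    (d1 : Ω1 →+ Ω2) (hd1d0 : ∀ f : A, d1 (d0 f) = 0)
    (P0 : A →+ A →+ A) (P1 : A →+ Ω1 →+ Ω1)
    (P11 : Ω1 →+ Ω1 →+ Ω2) (P2 : A →+ Ω2 →+ Ω2)
    (hP0 : ∀ f g h : A, P0 f (g * h) = g * P0 f h + h * P0 f g)
    (hP1L : ∀ (f g : A) (β : Ω1), P1 (f * g) β = f • P1 g β + g • P1 f β)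
    (hP1R : ∀ (f g : A) (β : Ω1), P1 f (g • β) = P0 f g • β + g • P1 f β)
    (hP11P : ∀ (f : A) (β γ : Ω1), P11 (f • β) γ = f • P11 β γ + w β (P1 f γ))
    (hP2L : ∀ (f g : A) (ω : Ω2), P2 f (g • ω) = P0 f g • ω + g • P2 f ω)
    (hP2w : ∀ (f : A) (β γ : Ω1), P2 f (w β γ) = w (P1 f β) γ + w β (P1 f γ))
    (hsymm : ∀ β γ : Ω1, P11 β γ = P11 γ β)
    (hflat : ∀ (f g : A) (β : Ω1), P1 f (P1 g β) - P1 g (P1 f β) = P1 (P0 f g) β)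
    (htf : ∀ f g : A, P1 f (d0 g) - P1 g (d0 f) = d0 (P0 f g))
    (hLeib : ∀ (f : A) (β : Ω1), d1 (P1 f β) = P11 (d0 f) β + P2 f (d1 β))
    (hgen : ∀ β : Ω1, β ∈ Submodule.span A (Set.range (d0 : A → Ω1)))
    (f g : A) (β γ : Ω1) :
    P2 (f * g) (P11 β γ) - P11 (P1 (f * g) β) γ - P11 (P1 (f * g) γ) β
      = f • (P2 g (P11 β γ) - P11 (P1 g β) γ - P11 (P1 g γ) β)
        + g • (P2 f (P11 β γ) - P11 (P1 f β) γ - P11 (P1 f γ) β) := by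
  have hswap := Mexpr_swap P1 P11 P2 hsymm
  have haddL := Mexpr_add_left P1 P11 P2
  have hzeroL := Mexpr_zero_left P1 P11 P2
  have hsmulL := Mexpr_smul_left w P0 P1 P11 P2 hP1R hP11P hP2L hP2w hsymm hflat
  have hrot := Mexpr_exact_rotate d0 d1 P0 P1 P11 P2 hd1d0 hsymm hflat htf hLeib
  have haddR : ∀ (h : A) (β γ γ' : Ω1),
      Mexpr P1 P11 P2 h β (γ + γ')
        = Mexpr P1 P11 P2 h β γ + Mexpr P1 P11 P2 h β γ' := by
    intro h β γ γ'
    rw [hswap h β (γ + γ'), haddL, hswap h γ β, hswap h γ' β]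
  have hzeroR : ∀ (h : A) (β : Ω1), Mexpr P1 P11 P2 h β 0 = 0 := by
    intro h β; rw [hswap h β 0, hzeroL]
  have hsmulR : ∀ (h a : A) (β γ : Ω1),
      Mexpr P1 P11 P2 h β (a • γ) = a • Mexpr P1 P11 P2 h β γ := by
    intro h a β γ
    rw [hswap h β (a • γ), hsmulL, hswap h γ β]
  have key : ∀ b c : A,
      Mexpr P1 P11 P2 (f * g) (d0 b) (d0 c)
        = f • Mexpr P1 P11 P2 g (d0 b) (d0 c)
          + g • Mexpr P1 P11 P2 f (d0 b) (d0 c) := by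
    intro b c
    rw [hrot (f * g) b c, hd0 f g, haddR, hsmulR, hsmulR, ← hrot g b c, ← hrot f b c]
  have step1 : ∀ (b : A) (γ : Ω1),
      Mexpr P1 P11 P2 (f * g) (d0 b) γ
        = f • Mexpr P1 P11 P2 g (d0 b) γ + g • Mexpr P1 P11 P2 f (d0 b) γ := by
    intro b γ
    induction hgen γ using Submodule.span_induction with
    | mem x hx =>
      obtain ⟨c, rfl⟩ := hx
      exact key b c
    | zero => rw [hzeroR, hzeroR, hzeroR, smul_zero, smul_zero, add_zero]
    | add x y _ _ hx hy =>
      rw [haddR, haddR, haddR, hx, hy, smul_add, smul_add]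
      abel
    | smul a x _ hx =>
      rw [hsmulR, hsmulR, hsmulR, hx, smul_add, smul_comm a f, smul_comm a g]
  have step2 : ∀ (β γ : Ω1),
      Mexpr P1 P11 P2 (f * g) β γ
        = f • Mexpr P1 P11 P2 g β γ + g • Mexpr P1 P11 P2 f β γ := by
    intro β γ
    induction hgen β using Submodule.span_induction with
    | mem x hx =>
      obtain ⟨b, rfl⟩ := hx
      exact step1 b γ
    | zero => rw [hzeroL, hzeroL, hzeroL, smul_zero, smul_zero, add_zero]
    | add x y _ _ hx hy =>
      rw [haddL, haddL, haddL, hx, hy, smul_add, smul_add]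
      abel
    | smul a x _ hx =>
      rw [hsmulL, hsmulL, hsmulL, hx, smul_add, smul_comm a f, smul_comm a g]
  exact step2 β γ
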